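/- arXiv:2412.02134 — 2 statements merged into one kernel-verified Lean document; each statement's English description precedes it below -/
import Mathlib

section
/- Let ρ be a density matrix and σ a density matrix on ℂ^d, let S be the swap operator on ℂ^d ⊗ ℂ^d, and let Δ be real. Then Tr₂[e^{-iΔS}(ρ ⊗ σ)e^{iΔS}] = cos²(Δ)·ρ - i·sin(Δ)cos(Δ)·[σ, ρ] + sin²(Δ)·σ. -/
open scoped ComplexOrder Kronecker

/-- The swap operator `S = ∑_{i,j} |i⟩⟨j| ⊗ |j⟩⟨i|` on `ℂ^d ⊗ ℂ^d`. -/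
def swapOp (d : ℕ) : Matrix (Fin d × Fin d) (Fin d × Fin d) ℂ :=
  Matrix.of fun p q => if p.1 = q.2 ∧ p.2 = q.1 then 1 else 0

/-- Partial trace over the second tensor factor. -/
noncomputable def ptrace2 {a b : Type*} [Fintype b]
    (M : Matrix (a × b) (a × b) ℂ) : Matrix a a ℂ :=
  Matrix.of fun i j => ∑ k, M (i, k) (j, k)

lemma swapOp_apply (d : ℕ) (p q : Fin d × Fin d) :
    swapOp d p q = if q = (p.2, p.1) then 1 else 0 := by
  simp only [swapOp, Matrix.of_apply, Prod.ext_iff]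
  congr 1
  exact propext ⟨fun ⟨h1, h2⟩ => ⟨h2.symm, h1.symm⟩, fun ⟨h1, h2⟩ => ⟨h2.symm, h1.symm⟩⟩

lemma swapOp_sq (d : ℕ) : swapOp d * swapOp d = 1 := by
  ext p q
  rw [Matrix.mul_apply]
  simp only [swapOp_apply]
  rw [Finset.sum_eq_single (p.2, p.1)]
  · simp [Matrix.one_apply, Prod.ext_iff, eq_comm, and_comm]
  · intro r _ hr
    rw [if_neg hr, zero_mul]
  · simp

lemma swapOp_mul_apply (d : ℕ) (M : Matrix (Fin d × Fin d) (Fin d × Fin d) ℂ)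
    (p q : Fin d × Fin d) : (swapOp d * M) p q = M (p.2, p.1) q := by
  rw [Matrix.mul_apply]
  rw [Finset.sum_eq_single (p.2, p.1)]
  · rw [swapOp_apply, if_pos rfl, one_mul]
  · intro r _ hr
    rw [swapOp_apply, if_neg hr, zero_mul]
  · simp

lemma mul_swapOp_apply (d : ℕ) (M : Matrix (Fin d × Fin d) (Fin d × Fin d) ℂ)
    (p q : Fin d × Fin d) : (M * swapOp d) p q = M p (q.2, q.1) := by
  rw [Matrix.mul_apply]
  rw [Finset.sum_eq_single (q.2, q.1)]
  · rw [swapOp_apply, if_pos (by simp), mul_one]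
  · intro r _ hr
    rw [swapOp_apply, if_neg (fun h => hr (by simp [Prod.ext_iff] at h ⊢; tauto)), mul_zero]
  · simp

lemma exp_smul_swapOp (d : ℕ) (r : ℝ) :
    NormedSpace.exp (((r : ℂ) * Complex.I) • swapOp d)
      = (Real.cos r : ℂ) • (1 : Matrix (Fin d × Fin d) (Fin d × Fin d) ℂ)
        + ((Real.sin r : ℂ) * Complex.I) • swapOp d := by
  letI : NormedRing (Matrix (Fin d × Fin d) (Fin d × Fin d) ℂ) := Matrix.linftyOpNormedRing
  letI : NormedAlgebra ℂ (Matrix (Fin d × Fin d) (Fin d × Fin d) ℂ) :=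
    Matrix.linftyOpNormedAlgebra
  rw [NormedSpace.exp_eq_tsum ℂ]
  refine HasSum.tsum_eq ?_
  have hSe : ∀ n : ℕ, (swapOp d) ^ (2 * n) = 1 := fun n => by
    rw [pow_mul, pow_two, swapOp_sq, one_pow]
  have hSo : ∀ n : ℕ, (swapOp d) ^ (2 * n + 1) = swapOp d := fun n => by
    rw [pow_succ, hSe, one_mul]
  have key : ∀ n : ℕ, ((n.factorial : ℂ))⁻¹ • (((r : ℂ) * Complex.I) • swapOp d) ^ n
      = (((n.factorial : ℂ))⁻¹ * ((r : ℂ) * Complex.I) ^ n) • (swapOp d) ^ n := fun n => by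
    rw [smul_pow, smul_smul]
  refine HasSum.even_add_odd ?_ ?_
  · have h := (Complex.hasSum_cos (r : ℂ)).smul_const
      (1 : Matrix (Fin d × Fin d) (Fin d × Fin d) ℂ)
    rw [← Complex.ofReal_cos] at h
    convert h using 2 with n
    · rfl
    rw [key, hSe]
    congr 1
    rw [mul_pow, pow_mul, pow_mul Complex.I 2 n, Complex.I_sq]
    ring
  · have h := ((Complex.hasSum_sin (r : ℂ)).mul_right Complex.I).smul_const (swapOp d)
    rw [← Complex.ofReal_sin] at h
    convert h using 2 with n
    · rfl
    rw [key, hSo]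
    congr 1
    rw [mul_pow, pow_succ Complex.I, pow_mul Complex.I 2 n, Complex.I_sq]
    ring

section lemmas
variable {d : ℕ} (ρ σ : Matrix (Fin d) (Fin d) ℂ)

lemma ptrace2_add (M N : Matrix ((Fin d) × (Fin d)) ((Fin d) × (Fin d)) ℂ) :
    ptrace2 (M + N) = ptrace2 M + ptrace2 N := by
  ext i j; simp [ptrace2, Finset.sum_add_distrib]

lemma ptrace2_smul (c : ℂ) (M : Matrix ((Fin d) × (Fin d)) ((Fin d) × (Fin d)) ℂ) :
    ptrace2 (c • M) = c • ptrace2 M := by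
  ext i j; simp [ptrace2, Finset.mul_sum]

lemma ptrace2_kron : ptrace2 (ρ ⊗ₖ σ) = σ.trace • ρ := by
  ext i j
  simp [ptrace2, Matrix.trace, Matrix.diag, ← Finset.mul_sum, mul_comm]

lemma ptrace2_swap_kron : ptrace2 (swapOp d * (ρ ⊗ₖ σ)) = σ * ρ := by
  ext i j
  simp only [ptrace2, Matrix.of_apply, swapOp_mul_apply]
  rw [Matrix.mul_apply]
  exact Finset.sum_congr rfl fun k _ => by simp [mul_comm]

lemma ptrace2_kron_swap : ptrace2 ((ρ ⊗ₖ σ) * swapOp d) = ρ * σ := by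
  ext i j
  simp only [ptrace2, Matrix.of_apply, mul_swapOp_apply]
  rw [Matrix.mul_apply]
  exact Finset.sum_congr rfl fun k _ => by simp

lemma ptrace2_swap_kron_swap :
    ptrace2 (swapOp d * (ρ ⊗ₖ σ) * swapOp d) = ρ.trace • σ := by
  ext i j
  simp only [ptrace2, Matrix.of_apply, mul_swapOp_apply, swapOp_mul_apply]
  simp [Matrix.trace, Matrix.diag, ← Finset.sum_mul]

end lemmas

theorem dme_single_step_exact (d : ℕ) (ρ σ : Matrix (Fin d) (Fin d) ℂ) (Δ : ℝ)
    (hρ : ρ.PosSemidef) (hρ1 : ρ.trace = 1)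
    (hσ : σ.PosSemidef) (hσ1 : σ.trace = 1) :
    ptrace2 (NormedSpace.exp ((-(Complex.I * (Δ : ℂ))) • swapOp d) * (ρ ⊗ₖ σ) *
        NormedSpace.exp ((Complex.I * (Δ : ℂ)) • swapOp d)) =
      ((Real.cos Δ : ℂ) ^ 2) • ρ
        - (Complex.I * (Real.sin Δ : ℂ) * (Real.cos Δ : ℂ)) • (σ * ρ - ρ * σ)
        + ((Real.sin Δ : ℂ) ^ 2) • σ := by
  have h1 : (-(Complex.I * (Δ : ℂ))) = (((-Δ : ℝ) : ℂ) * Complex.I) := by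
    push_cast; ring
  have h2 : (Complex.I * (Δ : ℂ)) = (((Δ : ℝ) : ℂ) * Complex.I) := by ring
  rw [h1, h2, exp_smul_swapOp, exp_smul_swapOp, Real.cos_neg, Real.sin_neg]
  push_cast
  simp only [Matrix.add_mul, Matrix.mul_add, Matrix.smul_mul, Matrix.mul_smul,
    Matrix.one_mul, Matrix.mul_one, smul_smul, ← Matrix.mul_assoc,
    ptrace2_add, ptrace2_smul, ptrace2_kron, ptrace2_swap_kron, ptrace2_kron_swap,
    ptrace2_swap_kron_swap, hρ1, hσ1, one_smul]
  ext i j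
  simp only [Matrix.add_apply, Matrix.sub_apply, Matrix.smul_apply, Matrix.neg_apply,
    smul_eq_mul]
  ring_nf
  rw [Complex.I_sq]
  ring
end

section
/- Let ρ and σ be density matrices. Then ½‖ρ - σ‖₁ ≤ √(1 - F(ρ,σ)), where F(ρ,σ) := ‖√ρ·√σ‖₁² is the fidelity. -/
open scoped ComplexOrder

/-- The positive semidefinite square root of a positive semidefinite matrix
(removed from Mathlib; restored here with its former definition). -/
noncomputable def Matrix.PosSemidef.sqrt {𝕜 : Type*} [RCLike 𝕜] {n : Type*} [Fintype n]
    [DecidableEq n] {A : Matrix n n 𝕜} (hA : A.PosSemidef) : Matrix n n 𝕜 :=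
  hA.1.eigenvectorUnitary.1 * Matrix.diagonal ((↑) ∘ (√·) ∘ hA.1.eigenvalues) *
  (star hA.1.eigenvectorUnitary : Matrix n n 𝕜)

/-- The Schatten 1-norm (trace norm) of a complex matrix:
`‖X‖₁ = Tr[√(X Xᴴ)]`. -/
noncomputable def traceNorm {n : Type*} [Fintype n] [DecidableEq n]
    (X : Matrix n n ℂ) : ℝ :=
  ((Matrix.posSemidef_self_mul_conjTranspose X).sqrt.trace).re

/-- The fidelity `F(ρ,σ) = ‖√ρ √σ‖₁²` of two positive semidefinite matrices. -/
noncomputable def fidelity {n : Type*} [Fintype n] [DecidableEq n]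
    {ρ σ : Matrix n n ℂ} (hρ : ρ.PosSemidef) (hσ : σ.PosSemidef) : ℝ :=
  (traceNorm (hρ.sqrt * hσ.sqrt)) ^ 2

open Matrix

section SqrtAux

open scoped MatrixOrder

variable {n : Type*} [Fintype n] [DecidableEq n]

lemma Matrix.PosSemidef.sqrt_eq_cfcSqrt {A : Matrix n n ℂ} (hA : A.PosSemidef) :
    hA.sqrt = CFC.sqrt A := by
  rw [CFC.sqrt_eq_real_sqrt A hA.nonneg, cfcₙ_eq_cfc, hA.1.cfc_eq]
  simp [Matrix.IsHermitian.cfc, Matrix.PosSemidef.sqrt, Unitary.conjStarAlgAut_apply]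

lemma Matrix.PosSemidef.posSemidef_sqrt {A : Matrix n n ℂ} (hA : A.PosSemidef) :
    hA.sqrt.PosSemidef := by
  rw [hA.sqrt_eq_cfcSqrt]
  exact (CFC.sqrt_nonneg A).posSemidef

lemma Matrix.PosSemidef.sqrt_mul_self {A : Matrix n n ℂ} (hA : A.PosSemidef) :
    hA.sqrt * hA.sqrt = A := by
  rw [hA.sqrt_eq_cfcSqrt]
  exact CFC.sqrt_mul_sqrt_self A hA.nonneg

lemma Matrix.PosSemidef.eq_sqrt_of_sq_eq {A : Matrix n n ℂ} (hA : A.PosSemidef)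
    (B : Matrix n n ℂ) {hB : B.PosSemidef} (hAB : A ^ 2 = B) : A = hB.sqrt := by
  rw [hB.sqrt_eq_cfcSqrt]
  exact (CFC.sqrt_unique (by rw [← hAB, pow_two]) hA.nonneg).symm

end SqrtAux

section Aux

set_option linter.unusedSectionVars false

variable {n : Type*} [Fintype n] [DecidableEq n]

/-- Polar decomposition: every square complex matrix `X` factors as
`X = √(XXᴴ) * V` with `V` unitary. -/
lemma exists_polar (X : Matrix n n ℂ) :
    ∃ V : Matrix n n ℂ, V * Vᴴ = 1 ∧ Vᴴ * V = 1 ∧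
      X = (Matrix.posSemidef_self_mul_conjTranspose X).sqrt * V := by
  classical
  set hA := Matrix.posSemidef_self_mul_conjTranspose X with hAdef
  set U : Matrix n n ℂ := (hA.1.eigenvectorUnitary : Matrix n n ℂ) with hUdef
  have hUU : star U * U = 1 :=
    (Matrix.mem_unitaryGroup_iff').mp hA.1.eigenvectorUnitary.2
  have hUU' : U * star U = 1 :=
    (Matrix.mem_unitaryGroup_iff).mp hA.1.eigenvectorUnitary.2
  set d : n → ℝ := hA.1.eigenvalues with hddef
  have hd0 : ∀ i, 0 ≤ d i := hA.eigenvalues_nonneg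
  set Y : Matrix n n ℂ := star U * X with hYdef
  have hYY : Y * Yᴴ = Matrix.diagonal (fun i => (d i : ℂ)) := by
    have hspec := hA.1.spectral_theorem
    rw [Unitary.conjStarAlgAut_apply] at hspec
    calc Y * Yᴴ = star U * (X * Xᴴ) * U := by
          simp only [hYdef, Matrix.conjTranspose_mul, Matrix.star_eq_conjTranspose]
          simp only [Matrix.conjTranspose_conjTranspose]
          noncomm_ring
      _ = star U * (U * Matrix.diagonal (RCLike.ofReal ∘ d) * star U) * U := by rw [← hspec]
      _ = Matrix.diagonal (fun i => (d i : ℂ)) := by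
          have e1 : star U * (U * Matrix.diagonal (RCLike.ofReal ∘ d) * star U) * U
              = (star U * U) * Matrix.diagonal (RCLike.ofReal ∘ d) * (star U * U) := by
            simp only [Matrix.mul_assoc]
          rw [e1, hUU, Matrix.one_mul, Matrix.mul_one]
          rfl
  have hrow : ∀ i, ∑ j, Complex.normSq (Y i j) = d i := by
    intro i
    have h := congrFun (congrFun hYY i) i
    simp only [Matrix.mul_apply, Matrix.conjTranspose_apply, Matrix.diagonal_apply_eq] at h
    have : (∑ j, (Complex.normSq (Y i j) : ℂ)) = (d i : ℂ) := by
      rw [← h]; congr 1; ext j; rw [← Complex.mul_conj]; rfl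
    exact_mod_cast this
  have hzero : ∀ i, d i = 0 → ∀ j, Y i j = 0 := by
    intro i hi j
    have h := hrow i
    rw [hi] at h
    have := (Finset.sum_eq_zero_iff_of_nonneg (fun j _ => Complex.normSq_nonneg (Y i j))).mp h
      j (Finset.mem_univ j)
    exact Complex.normSq_eq_zero.mp this
  -- the candidate rows
  set v : n → EuclideanSpace ℂ n :=
    fun i => ((Real.sqrt (d i) : ℂ))⁻¹ • WithLp.toLp 2 (fun j => Y i j) with hvdef
  have hortho : Orthonormal ℂ ({i | d i ≠ 0}.restrict v) := by
    rw [orthonormal_iff_ite]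
    rintro ⟨i, hi⟩ ⟨k, hk⟩
    change inner ℂ (v i) (v k) = _
    have hinner : (inner ℂ (v i) (v k) : ℂ)
        = (starRingEnd ℂ) ((Real.sqrt (d i) : ℂ))⁻¹ * ((Real.sqrt (d k) : ℂ))⁻¹
          * ∑ j, (starRingEnd ℂ) (Y i j) * Y k j := by
      simp only [hvdef, inner_smul_left, inner_smul_right, PiLp.inner_apply,
        RCLike.inner_apply]
      ring_nf
      congr 1
      exact Finset.sum_congr rfl fun j _ => mul_comm _ _
    have hYki : (∑ j, (starRingEnd ℂ) (Y i j) * Y k j)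
        = (if k = i then (d k : ℂ) else 0) := by
      have h := congrFun (congrFun hYY k) i
      simp only [Matrix.mul_apply, Matrix.conjTranspose_apply, Matrix.diagonal_apply] at h
      rw [← h]
      exact Finset.sum_congr rfl fun j _ => by rw [mul_comm]; rfl
    rw [hinner, hYki]
    by_cases hik : i = k
    · subst hik
      simp only [if_pos rfl]
      have hsq : ((Real.sqrt (d i) : ℂ)) * ((Real.sqrt (d i) : ℂ)) = (d i : ℂ) := by
        rw [← Complex.ofReal_mul, Real.mul_self_sqrt (hd0 i)]
      have hne : ((Real.sqrt (d i) : ℂ)) ≠ 0 := by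
        simp only [ne_eq, Complex.ofReal_eq_zero]
        exact fun h => hi (le_antisymm (Real.sqrt_eq_zero'.mp h) (hd0 i))
      have hconj : (starRingEnd ℂ) (((Real.sqrt (d i) : ℂ))⁻¹) = ((Real.sqrt (d i) : ℂ))⁻¹ := by
        rw [map_inv₀, Complex.conj_ofReal]
      rw [hconj, ← hsq]
      field_simp
      simp
    · rw [if_neg (Ne.symm hik), if_neg (by simp [Subtype.ext_iff, hik]), mul_zero]
  obtain ⟨b, hb⟩ := hortho.exists_orthonormalBasis_extension_of_card_eq
    (by simp [finrank_euclideanSpace])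
  set V' : Matrix n n ℂ := Matrix.of (fun i j => b i j) with hV'def
  have hV'unit : V' * V'ᴴ = 1 := by
    ext i k
    have hb2 := (orthonormal_iff_ite.mp b.orthonormal) i k
    simp only [PiLp.inner_apply, RCLike.inner_apply] at hb2
    simp only [hV'def, Matrix.mul_apply, Matrix.conjTranspose_apply, Matrix.of_apply,
      Matrix.one_apply]
    have : (∑ j, b i j * star (b k j)) = star (∑ j, (starRingEnd ℂ) (b i j) * b k j) := by
      rw [star_sum]
      exact Finset.sum_congr rfl fun j _ => by
        simp [star_mul', mul_comm]
    rw [this, show (∑ j, (starRingEnd ℂ) (b i j) * b k j) = ∑ j, b k j * (starRingEnd ℂ) (b i j)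
      from Finset.sum_congr rfl fun j _ => mul_comm _ _, hb2]
    split <;> simp
  have hDV : Matrix.diagonal (fun i => ((Real.sqrt (d i) : ℂ))) * V' = Y := by
    ext i j
    rw [Matrix.diagonal_mul]
    by_cases hi : d i = 0
    · simp [hi, hzero i hi j]
    · have hbi : b i = v i := hb i hi
      have : V' i j = ((Real.sqrt (d i) : ℂ))⁻¹ * Y i j := by
        simp only [hV'def, Matrix.of_apply, hbi, hvdef]
        rfl
      rw [this]
      have hne : ((Real.sqrt (d i) : ℂ)) ≠ 0 := by
        simp only [ne_eq, Complex.ofReal_eq_zero]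
        exact fun h => hi (le_antisymm (Real.sqrt_eq_zero'.mp h) (hd0 i))
      field_simp
  refine ⟨U * V', ?_, ?_, ?_⟩
  · have h1 : (U * V') * (U * V')ᴴ = U * (V' * V'ᴴ) * star U := by
      simp only [Matrix.conjTranspose_mul, Matrix.star_eq_conjTranspose, Matrix.mul_assoc]
    rw [h1, hV'unit, Matrix.mul_one]
    exact hUU'
  · rw [mul_eq_one_comm]
    have h1 : (U * V') * (U * V')ᴴ = U * (V' * V'ᴴ) * star U := by
      simp only [Matrix.conjTranspose_mul, Matrix.star_eq_conjTranspose, Matrix.mul_assoc]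
    rw [h1, hV'unit, Matrix.mul_one]
    exact hUU'
  · have hsqrt : hA.sqrt = U * Matrix.diagonal (fun i => ((Real.sqrt (d i) : ℂ))) * star U := by
      rfl
    rw [hsqrt]
    calc X = (U * star U) * X := by rw [hUU', Matrix.one_mul]
      _ = U * Y := by rw [hYdef, Matrix.mul_assoc]
      _ = U * (Matrix.diagonal (fun i => ((Real.sqrt (d i) : ℂ))) * V') := by rw [hDV]
      _ = U * Matrix.diagonal (fun i => ((Real.sqrt (d i) : ℂ))) * (star U * U) * V' := by
          rw [hUU]
          simp only [Matrix.mul_assoc, Matrix.one_mul]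
      _ = U * Matrix.diagonal (fun i => ((Real.sqrt (d i) : ℂ))) * star U * (U * V') := by
          simp only [Matrix.mul_assoc]

/-- `Tr(A Aᴴ).re` is the squared Frobenius norm. -/
lemma trace_self_conjTranspose_re (A : Matrix n n ℂ) :
    ((A * Aᴴ).trace).re = ∑ p : n × n, ‖A p.1 p.2‖ ^ 2 := by
  rw [Matrix.trace]
  simp only [Matrix.diag_apply, Matrix.mul_apply, Matrix.conjTranspose_apply]
  rw [← Finset.sum_product', Complex.re_sum]
  refine Finset.sum_congr rfl fun p _ => ?_
  have : A p.1 p.2 * star (A p.1 p.2) = ((Complex.normSq (A p.1 p.2) : ℝ) : ℂ) :=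
    Complex.mul_conj _
  rw [this, Complex.ofReal_re, Complex.normSq_eq_norm_sq]

/-- Cauchy–Schwarz for the Frobenius inner product. -/
lemma trace_cs (A B : Matrix n n ℂ) :
    ‖(A * Bᴴ).trace‖ ≤
      Real.sqrt (((A * Aᴴ).trace).re) * Real.sqrt (((B * Bᴴ).trace).re) := by
  classical
  set a : EuclideanSpace ℂ (n × n) := WithLp.toLp 2 (fun p : n × n => A p.1 p.2) with hadef
  set b : EuclideanSpace ℂ (n × n) := WithLp.toLp 2 (fun p : n × n => B p.1 p.2) with hbdef
  have h1 : (A * Bᴴ).trace = inner ℂ b a := by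
    rw [Matrix.trace]
    simp only [Matrix.diag_apply, Matrix.mul_apply, Matrix.conjTranspose_apply]
    rw [← Finset.sum_product']
    rw [PiLp.inner_apply]
    exact Finset.sum_congr rfl fun p _ => by rw [mul_comm]; simp [hadef, hbdef, RCLike.inner_apply, Complex.star_def]; ring
  have hna : ‖a‖ = Real.sqrt (((A * Aᴴ).trace).re) := by
    rw [EuclideanSpace.norm_eq, trace_self_conjTranspose_re]
  have hnb : ‖b‖ = Real.sqrt (((B * Bᴴ).trace).re) := by
    rw [EuclideanSpace.norm_eq, trace_self_conjTranspose_re]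
  calc ‖(A * Bᴴ).trace‖ = ‖(inner ℂ b a : ℂ)‖ := by
        rw [h1]
    _ ≤ ‖b‖ * ‖a‖ := norm_inner_le_norm b a
    _ = Real.sqrt (((A * Aᴴ).trace).re) * Real.sqrt (((B * Bᴴ).trace).re) := by
        rw [hna, hnb, mul_comm]

lemma traceNorm_conjTranspose (M : Matrix n n ℂ) : traceNorm Mᴴ = traceNorm M := by
  obtain ⟨V, hVV, hVV', hpol⟩ := exists_polar M
  set H := (Matrix.posSemidef_self_mul_conjTranspose M).sqrt with hHdef
  have hHps : H.PosSemidef := (Matrix.posSemidef_self_mul_conjTranspose M).posSemidef_sqrt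
  have hP : (Vᴴ * H * V).PosSemidef := hHps.conjTranspose_mul_mul_same V
  have hsq : (Vᴴ * H * V) ^ 2 = Mᴴ * (Mᴴ)ᴴ := by
    rw [Matrix.conjTranspose_conjTranspose]
    conv_rhs => rw [hpol]
    rw [Matrix.conjTranspose_mul, hHps.1, pow_two]
    calc Vᴴ * H * V * (Vᴴ * H * V) = Vᴴ * H * (V * Vᴴ) * (H * V) := by
          simp only [Matrix.mul_assoc]
      _ = Vᴴ * H * (H * V) := by rw [hVV, Matrix.mul_one]
  have heq : Vᴴ * H * V = (Matrix.posSemidef_self_mul_conjTranspose Mᴴ).sqrt :=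
    hP.eq_sqrt_of_sq_eq _ hsq
  have htr : (Vᴴ * H * V).trace = H.trace := by
    rw [Matrix.trace_mul_cycle, hVV, Matrix.one_mul]
  unfold traceNorm
  rw [← heq, htr]

end Aux

/-- Fuchs–van de Graaf inequality: `½‖ρ - σ‖₁ ≤ √(1 - F(ρ,σ))`. -/
theorem fuchs_van_de_graaf {n : Type*} [Fintype n] [DecidableEq n]
    {ρ σ : Matrix n n ℂ} (hρ : ρ.PosSemidef) (hρ1 : ρ.trace = 1)
    (hσ : σ.PosSemidef) (hσ1 : σ.trace = 1) :
    (1 / 2) * traceNorm (ρ - σ) ≤ Real.sqrt (1 - fidelity hρ hσ) := by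
  classical
  set A := hρ.sqrt with hAdef
  set B0 := hσ.sqrt with hB0def
  have hAH : Aᴴ = A := hρ.posSemidef_sqrt.1
  have hB0H : B0ᴴ = B0 := hσ.posSemidef_sqrt.1
  have hAA : A * A = ρ := hρ.sqrt_mul_self
  have hBB0 : B0 * B0 = σ := hσ.sqrt_mul_self
  set N := B0 * A with hNdef
  obtain ⟨W, hWW, hWW', hNpol⟩ := exists_polar N
  set f := traceNorm (A * B0) with hfdef
  have hfid : fidelity hρ hσ = f ^ 2 := rfl
  -- the rotated square root of σ
  set B := B0 * W with hBdef
  have hBBH : B * Bᴴ = σ := by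
    rw [hBdef, Matrix.conjTranspose_mul]
    calc B0 * W * (Wᴴ * B0ᴴ) = B0 * (W * Wᴴ) * B0ᴴ := by simp only [Matrix.mul_assoc]
      _ = σ := by rw [hWW, Matrix.mul_one, hB0H, hBB0]
  have hAAH : A * Aᴴ = ρ := by rw [hAH, hAA]
  -- the key trace identity : Re Tr(A Bᴴ) = f
  have hABH : (((A * Bᴴ).trace)).re = f := by
    have h1 : A * Bᴴ = A * Wᴴ * B0 := by
      rw [hBdef, Matrix.conjTranspose_mul, hB0H, Matrix.mul_assoc]
    have h2 : (A * Bᴴ).trace = (N * Wᴴ).trace := by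
      rw [h1, Matrix.trace_mul_cycle, hNdef, Matrix.mul_assoc]
    have h3 : N * Wᴴ = (Matrix.posSemidef_self_mul_conjTranspose N).sqrt := by
      conv_lhs => rw [hNpol]
      rw [Matrix.mul_assoc, hWW, Matrix.mul_one]
    have h4 : traceNorm N = f := by
      have h5 : N = (A * B0)ᴴ := by
        rw [hNdef, Matrix.conjTranspose_mul, hAH, hB0H]
      rw [h5, traceNorm_conjTranspose]
    rw [h2, h3]
    exact h4
  have hBAH : (((B * Aᴴ).trace)).re = f := by
    have h1 : B * Aᴴ = (A * Bᴴ)ᴴ := by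
      rw [Matrix.conjTranspose_mul, Matrix.conjTranspose_conjTranspose]
    rw [h1, Matrix.trace_conjTranspose]
    rw [show star ((A * Bᴴ).trace) = (starRingEnd ℂ) ((A * Bᴴ).trace) from rfl,
      Complex.conj_re]
    exact hABH
  -- the two Hilbert-Schmidt norms
  set t₁ : ℝ := (((A - B) * (A - B)ᴴ).trace).re with ht₁def
  set t₂ : ℝ := (((A + B) * (A + B)ᴴ).trace).re with ht₂def
  have ht₁nn : 0 ≤ t₁ := by
    rw [ht₁def, trace_self_conjTranspose_re]
    positivity
  have ht₂nn : 0 ≤ t₂ := by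
    rw [ht₂def, trace_self_conjTranspose_re]
    positivity
  have hexp1 : (A - B) * (A - B)ᴴ = ρ + σ - (A * Bᴴ + B * Aᴴ) := by
    rw [Matrix.conjTranspose_sub]
    rw [← hAAH, ← hBBH]
    noncomm_ring
  have hexp2 : (A + B) * (A + B)ᴴ = ρ + σ + (A * Bᴴ + B * Aᴴ) := by
    rw [Matrix.conjTranspose_add]
    rw [← hAAH, ← hBBH]
    noncomm_ring
  have ht₁ : t₁ = 2 - 2 * f := by
    rw [ht₁def, hexp1, Matrix.trace_sub, Matrix.trace_add, Matrix.trace_add, hρ1, hσ1,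
      Complex.sub_re, Complex.add_re, Complex.add_re, hABH, hBAH, Complex.one_re]
    ring
  have ht₂ : t₂ = 2 + 2 * f := by
    rw [ht₂def, hexp2, Matrix.trace_add, Matrix.trace_add, Matrix.trace_add, hρ1, hσ1,
      Complex.add_re, Complex.add_re, Complex.add_re, hABH, hBAH, Complex.one_re]
    ring
  -- polar decomposition of ρ - σ
  obtain ⟨V, hVV, hVV', hpol⟩ := exists_polar (ρ - σ)
  have htn : traceNorm (ρ - σ) = (((ρ - σ) * Vᴴ).trace).re := by
    have h1 : (ρ - σ) * Vᴴ = (Matrix.posSemidef_self_mul_conjTranspose (ρ - σ)).sqrt := by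
      conv_lhs => rw [hpol]
      rw [Matrix.mul_assoc, hVV, Matrix.mul_one]
    rw [h1]
    rfl
  -- the two cross terms
  set P := (A - B) * (A + B)ᴴ with hPdef
  set Q := (A + B) * (A - B)ᴴ with hQdef
  have hdecomp : P + Q = (ρ - σ) + (ρ - σ) := by
    have h1 : P + Q = (A * Aᴴ - B * Bᴴ) + (A * Aᴴ - B * Bᴴ) := by
      rw [hPdef, hQdef, Matrix.conjTranspose_add, Matrix.conjTranspose_sub]
      noncomm_ring
    rw [h1, hAAH, hBBH]
  -- bounding the cross terms via Cauchy-Schwarz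
  have hcross : ∀ C D : Matrix n n ℂ,
      (((C * Dᴴ * Vᴴ).trace)).re ≤
        Real.sqrt (((C * Cᴴ).trace).re) * Real.sqrt (((D * Dᴴ).trace).re) := by
    intro C D
    have h1 : C * Dᴴ * Vᴴ = C * (V * D)ᴴ := by
      rw [Matrix.conjTranspose_mul, Matrix.mul_assoc]
    have h2 : ((V * D) * (V * D)ᴴ).trace = (D * Dᴴ).trace := by
      rw [Matrix.conjTranspose_mul]
      calc (V * D * (Dᴴ * Vᴴ)).trace = (V * (D * Dᴴ) * Vᴴ).trace := by
            simp only [Matrix.mul_assoc]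
        _ = (Vᴴ * V * (D * Dᴴ)).trace := by rw [Matrix.trace_mul_cycle]
        _ = (D * Dᴴ).trace := by rw [hVV', Matrix.one_mul]
    calc (((C * Dᴴ * Vᴴ).trace)).re ≤ ‖(C * Dᴴ * Vᴴ).trace‖ :=
          Complex.re_le_norm _
      _ = ‖(C * (V * D)ᴴ).trace‖ := by rw [h1]
      _ ≤ Real.sqrt (((C * Cᴴ).trace).re) * Real.sqrt ((((V * D) * (V * D)ᴴ).trace).re) :=
          trace_cs C (V * D)
      _ = Real.sqrt (((C * Cᴴ).trace).re) * Real.sqrt (((D * Dᴴ).trace).re) := by rw [h2]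
  have hb1 : ((P * Vᴴ).trace).re ≤ Real.sqrt t₁ * Real.sqrt t₂ := hcross (A - B) (A + B)
  have hb2 : ((Q * Vᴴ).trace).re ≤ Real.sqrt t₂ * Real.sqrt t₁ := hcross (A + B) (A - B)
  -- combine
  have hsum : traceNorm (ρ - σ) + traceNorm (ρ - σ)
      = ((P * Vᴴ).trace).re + ((Q * Vᴴ).trace).re := by
    rw [htn, ← Complex.add_re, ← Matrix.trace_add, ← Matrix.add_mul, ← hdecomp,
      Matrix.add_mul, Matrix.trace_add, Complex.add_re]
  have hmain : traceNorm (ρ - σ) ≤ Real.sqrt t₁ * Real.sqrt t₂ := by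
    nlinarith [hb1, hb2, hsum]
  have hfinal : Real.sqrt t₁ * Real.sqrt t₂ = 2 * Real.sqrt (1 - f ^ 2) := by
    rw [← Real.sqrt_mul ht₁nn]
    have h1 : t₁ * t₂ = 2 ^ 2 * (1 - f ^ 2) := by rw [ht₁, ht₂]; ring
    rw [h1, Real.sqrt_mul (by positivity), Real.sqrt_sq (by norm_num)]
  rw [hfid]
  calc (1 / 2) * traceNorm (ρ - σ) ≤ (1 / 2) * (Real.sqrt t₁ * Real.sqrt t₂) := by
        linarith [hmain]
    _ = Real.sqrt (1 - f ^ 2) := by rw [hfinal]; ring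
end
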